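/- Let $\sigma > 0$, $\alpha,\beta \in \mathbb{C}\setminus\{0\}$. Define the operators $\mathcal{U} = Z + \sigma/\alpha$ and $\mathcal{V} = \alpha D_\beta + 1$ on the space of polynomials, where $Z$ is multiplication by $z$ and $(D_\beta f)(z) = (f(z+\beta)-f(z))/\beta$. Then with $\mathcal{R} = \mathcal{U}\mathcal{V}$, for every $n \geq 1$: $(\mathcal{R}^n 1)(z) = \sum_{k=1}^{n}(\alpha-\beta)^{n-k} S(n,k)\,(z + \sigma/\alpha \mid -\beta)_k$. -/

import Mathlib

open Polynomial

/-- The `β`-difference operator `(D_β f)(z) = (f(z+β) - f(z))/β` on polynomials. -/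
noncomputable def Dop (β : ℂ) (p : Polynomial ℂ) : Polynomial ℂ :=
  C β⁻¹ * (p.comp (X + C β) - p)

/-- `𝒰 = Z + σ/α`. -/
noncomputable def Uop (σ α : ℂ) (p : Polynomial ℂ) : Polynomial ℂ := X * p + C (σ / α) * p

/-- `𝒱 = α D_β + 1`. -/
noncomputable def Vop (α β : ℂ) (p : Polynomial ℂ) : Polynomial ℂ := C α * Dop β p + p


noncomputable def st : ℕ → ℕ → ℂ
  | 0, 0 => 1
  | 0, _+1 => 0
  | _+1, 0 => 0
  | n+1, k+1 => (k+1 : ℂ) * st n (k+1) + st n k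

lemma st_zero (n : ℕ) (hn : 1 ≤ n) : st n 0 = 0 := by
  match n, hn with
  | n+1, _ => rfl

lemma st_gt : ∀ (n k : ℕ), n < k → st n k = 0 := by
  intro n
  induction n with
  | zero => intro k h; match k, h with | k+1, _ => rfl
  | succ n ih =>
    intro k h
    match k, h with
    | k+1, h =>
      show (k+1 : ℂ) * st n (k+1) + st n k = 0
      rw [ih _ (by omega), ih _ (by omega)]; ring

lemma st_id (n : ℕ) (z : ℂ) :
    z ^ n = ∑ k ∈ Finset.range (n+1), st n k * ∏ j ∈ Finset.range k, (z - j) := by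
  induction n with
  | zero => simp [st]
  | succ n ih =>
    have key : ∀ k : ℕ, z * ∏ j ∈ Finset.range k, (z - j)
        = ∏ j ∈ Finset.range (k+1), (z - j) + (k:ℂ) * ∏ j ∈ Finset.range k, (z - j) := by
      intro k
      rw [Finset.prod_range_succ]
      ring
    have h2 : ∑ k ∈ Finset.range (n+1), (k:ℂ) * st n k * ∏ j ∈ Finset.range k, (z - j)
        = ∑ k ∈ Finset.range (n+1), ((k:ℂ)+1) * st n (k+1) * ∏ j ∈ Finset.range (k+1), (z - j) := by
      rw [Finset.sum_range_succ' (fun k => (k:ℂ) * st n k * ∏ j ∈ Finset.range k, (z - j)) n]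
      rw [Finset.sum_range_succ (fun k => ((k:ℂ)+1) * st n (k+1) * ∏ j ∈ Finset.range (k+1), (z - j)) n]
      rw [st_gt n (n+1) (by omega)]
      push_cast
      ring
    calc z ^ (n+1) = z * z ^ n := by ring
    _ = ∑ k ∈ Finset.range (n+1), st n k * (z * ∏ j ∈ Finset.range k, (z - j)) := by
        rw [ih, Finset.mul_sum]; exact Finset.sum_congr rfl fun k _ => by ring
    _ = ∑ k ∈ Finset.range (n+1), (st n k * ∏ j ∈ Finset.range (k+1), (z - j)
          + (k:ℂ) * st n k * ∏ j ∈ Finset.range k, (z - j)) := by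
        refine Finset.sum_congr rfl fun k _ => ?_
        rw [key]; ring
    _ = ∑ k ∈ Finset.range (n+1), st n k * ∏ j ∈ Finset.range (k+1), (z - j)
          + ∑ k ∈ Finset.range (n+1), (k:ℂ) * st n k * ∏ j ∈ Finset.range k, (z - j) :=
        Finset.sum_add_distrib
    _ = ∑ k ∈ Finset.range (n+1), st (n+1) (k+1) * ∏ j ∈ Finset.range (k+1), (z - j) := by
        rw [h2, ← Finset.sum_add_distrib]
        refine Finset.sum_congr rfl fun k _ => ?_
        show st n k * _ + _ = ((k+1 : ℂ) * st n (k+1) + st n k) * _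
        push_cast; ring
    _ = ∑ k ∈ Finset.range (n+2), st (n+1) k * ∏ j ∈ Finset.range k, (z - j) := by
        rw [Finset.sum_range_succ' (fun k => st (n+1) k * ∏ j ∈ Finset.range k, (z - j)) (n+1)]
        simp [st_zero (n+1) (by omega)]


lemma unique_coeffs (n : ℕ) (c : ℕ → ℂ)
    (h : ∀ z : ℂ, ∑ k ∈ Finset.Icc 1 n, c k * ∏ j ∈ Finset.range k, (z - j) = 0) :
    ∀ k ∈ Finset.Icc 1 n, c k = 0 := by
  intro k
  induction k using Nat.strong_induction_on with
  | _ k ih =>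
    intro hk
    have h0 := h (k : ℂ)
    rw [Finset.sum_eq_single_of_mem k hk (fun m hm hmk => ?_)] at h0
    · have hne : (∏ j ∈ Finset.range k, ((k:ℂ) - j)) ≠ 0 := by
        rw [Finset.prod_ne_zero_iff]
        intro j hj
        have hjk : j < k := Finset.mem_range.mp hj
        have : (j:ℂ) ≠ (k:ℂ) := by exact_mod_cast hjk.ne
        exact sub_ne_zero_of_ne (Ne.symm this)
      exact (mul_eq_zero.mp h0).resolve_right hne
    · rcases lt_or_gt_of_ne hmk with hlt | hgt
      · rw [ih m hlt hm, zero_mul]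
      · rw [Finset.prod_eq_zero (Finset.mem_range.mpr hgt) (sub_self (k:ℂ)), mul_zero]

lemma key_step (α β c : ℂ) (hβ : β ≠ 0) (k : ℕ) (z : ℂ) :
    (z + c) * (α * (β⁻¹ * ((∏ j ∈ Finset.range k, (z + β + c + j*β))
        - ∏ j ∈ Finset.range k, (z + c + j*β))) + ∏ j ∈ Finset.range k, (z + c + j*β))
    = ∏ j ∈ Finset.range (k+1), (z + c + j*β)
      + (k:ℂ) * (α - β) * ∏ j ∈ Finset.range k, (z + c + j*β) := by
  cases k with
  | zero => simp
  | succ k =>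
    have hP : ∏ j ∈ Finset.range (k+1), (z + c + j*β)
        = (∏ j ∈ Finset.range k, (z + β + c + j*β)) * (z + c) := by
      rw [Finset.prod_range_succ' (fun j => z + c + (j:ℂ)*β) k]
      push_cast
      refine congrArg₂ _ (Finset.prod_congr rfl fun j _ => by push_cast; ring) (by ring)
    have h1 : ∏ j ∈ Finset.range (k+1), (z + β + c + j*β)
        = (∏ j ∈ Finset.range k, (z + β + c + j*β)) * (z + β + c + k*β) :=
      Finset.prod_range_succ _ _
    have h3 : ∏ j ∈ Finset.range (k+2), (z + c + j*β)
        = (∏ j ∈ Finset.range (k+1), (z + c + j*β)) * (z + c + (k+1)*β) := by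
      rw [Finset.prod_range_succ]; push_cast; ring
    rw [h1, h3, hP]
    field_simp
    push_cast
    ring

lemma eval_R (σ α β : ℂ) (q : Polynomial ℂ) (z : ℂ) :
    (Uop σ α (Vop α β q)).eval z
      = (z + σ/α) * (α * (β⁻¹ * (q.eval (z+β) - q.eval z)) + q.eval z) := by
  simp [Uop, Vop, Dop, eval_comp]
  ring

lemma sum_step (α β c : ℂ) (hβ : β ≠ 0) (n : ℕ) (z : ℂ) :
    (z + c) * (α * (β⁻¹ * ((∑ k ∈ Finset.range (n+1), (α-β)^(n-k) * st n k * ∏ j ∈ Finset.range k, (z + β + c + j*β))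
        - ∑ k ∈ Finset.range (n+1), (α-β)^(n-k) * st n k * ∏ j ∈ Finset.range k, (z + c + j*β)))
      + ∑ k ∈ Finset.range (n+1), (α-β)^(n-k) * st n k * ∏ j ∈ Finset.range k, (z + c + j*β))
    = ∑ k ∈ Finset.range (n+2), (α-β)^(n+1-k) * st (n+1) k * ∏ j ∈ Finset.range k, (z + c + j*β) := by
  have e1 : (z + c) * (α * (β⁻¹ * ((∑ k ∈ Finset.range (n+1), (α-β)^(n-k) * st n k * ∏ j ∈ Finset.range k, (z + β + c + j*β))
        - ∑ k ∈ Finset.range (n+1), (α-β)^(n-k) * st n k * ∏ j ∈ Finset.range k, (z + c + j*β)))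
      + ∑ k ∈ Finset.range (n+1), (α-β)^(n-k) * st n k * ∏ j ∈ Finset.range k, (z + c + j*β))
      = ∑ k ∈ Finset.range (n+1), (α-β)^(n-k) * st n k *
          ((z + c) * (α * (β⁻¹ * ((∏ j ∈ Finset.range k, (z + β + c + j*β))
            - ∏ j ∈ Finset.range k, (z + c + j*β))) + ∏ j ∈ Finset.range k, (z + c + j*β))) := by
    rw [← Finset.sum_sub_distrib, Finset.mul_sum, Finset.mul_sum, ← Finset.sum_add_distrib,
      Finset.mul_sum]
    exact Finset.sum_congr rfl fun k _ => by ring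
  rw [e1]
  have e2 : ∀ k ∈ Finset.range (n+1), (α-β)^(n-k) * st n k *
          ((z + c) * (α * (β⁻¹ * ((∏ j ∈ Finset.range k, (z + β + c + j*β))
            - ∏ j ∈ Finset.range k, (z + c + j*β))) + ∏ j ∈ Finset.range k, (z + c + j*β)))
      = (α-β)^(n-k) * st n k * ∏ j ∈ Finset.range (k+1), (z + c + j*β)
        + (k:ℂ) * (α - β) * ((α-β)^(n-k) * st n k) * ∏ j ∈ Finset.range k, (z + c + j*β) := by
    intro k _
    rw [key_step α β c hβ k z]
    ring
  rw [Finset.sum_congr rfl e2, Finset.sum_add_distrib]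
  have e3 : ∑ k ∈ Finset.range (n+1), (k:ℂ) * (α - β) * ((α-β)^(n-k) * st n k) * ∏ j ∈ Finset.range k, (z + c + j*β)
      = ∑ k ∈ Finset.range (n+1), ((k:ℂ)+1) * (α - β) * ((α-β)^(n-(k+1)) * st n (k+1)) * ∏ j ∈ Finset.range (k+1), (z + c + j*β) := by
    rw [Finset.sum_range_succ' (fun k => (k:ℂ) * (α - β) * ((α-β)^(n-k) * st n k) * ∏ j ∈ Finset.range k, (z + c + j*β)) n]
    rw [Finset.sum_range_succ (fun k => ((k:ℂ)+1) * (α - β) * ((α-β)^(n-(k+1)) * st n (k+1)) * ∏ j ∈ Finset.range (k+1), (z + c + j*β)) n]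
    rw [st_gt n (n+1) (by omega)]
    push_cast
    ring
  rw [e3, ← Finset.sum_add_distrib]
  have e4 : ∀ k ∈ Finset.range (n+1),
      (α-β)^(n-k) * st n k * ∏ j ∈ Finset.range (k+1), (z + c + j*β)
        + ((k:ℂ)+1) * (α - β) * ((α-β)^(n-(k+1)) * st n (k+1)) * ∏ j ∈ Finset.range (k+1), (z + c + j*β)
      = (α-β)^(n+1-(k+1)) * st (n+1) (k+1) * ∏ j ∈ Finset.range (k+1), (z + c + j*β) := by
    intro k hk
    have hk' : k ≤ n := by have := Finset.mem_range.mp hk; omega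
    have hst : st (n+1) (k+1) = ((k:ℂ)+1) * st n (k+1) + st n k := rfl
    have hs : n + 1 - (k+1) = n - k := by omega
    rw [hst, hs]
    rcases eq_or_lt_of_le hk' with h | h
    · rw [h, st_gt n (n+1) (by omega)]
      ring
    · have h2 : n - k = (n - (k+1)) + 1 := by omega
      rw [h2, pow_succ]
      ring
  rw [Finset.sum_congr rfl e4]
  rw [Finset.sum_range_succ' (fun k => (α-β)^(n+1-k) * st (n+1) k * ∏ j ∈ Finset.range k, (z + c + j*β)) (n+1)]
  have : st (n+1) 0 = 0 := rfl
  simp [this]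


lemma iter_eval (σ α β : ℂ) (hβ : β ≠ 0) :
    ∀ (n : ℕ) (z : ℂ),
      (((fun p => Uop σ α (Vop α β p))^[n]) 1).eval z
        = ∑ k ∈ Finset.range (n+1), (α-β)^(n-k) * st n k *
            ∏ j ∈ Finset.range k, (z + σ/α + j*β) := by
  intro n
  induction n with
  | zero => intro z; simp [st]
  | succ n ih =>
    intro z
    rw [Function.iterate_succ_apply', eval_R, ih (z + β), ih z]
    exact sum_step α β (σ/α) hβ n z

theorem stmt_11 (σ : ℝ) (hσ : 0 < σ) (α β : ℂ) (hα : α ≠ 0) (hβ : β ≠ 0)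
    (S : ℕ → ℕ → ℂ)
    (hS : ∀ n, 1 ≤ n → ∀ z : ℂ,
      z ^ n = ∑ k ∈ Finset.Icc 1 n, S n k * ∏ j ∈ Finset.range k, (z - j))
    (n : ℕ) (hn : 1 ≤ n) (z : ℂ) :
    (((fun p => Uop (σ : ℂ) α (Vop α β p))^[n]) 1).eval z =
      ∑ k ∈ Finset.Icc 1 n, (α - β) ^ (n - k) * S n k *
        ∏ j ∈ Finset.range k, (z + (σ : ℂ) / α + j * β) := by
  have hsub : Finset.Icc 1 n ⊆ Finset.range (n+1) := by
    intro k hk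
    simp only [Finset.mem_Icc] at hk
    exact Finset.mem_range.mpr (by omega)
  have hicc : ∀ (f : ℕ → ℂ), ∑ k ∈ Finset.Icc 1 n, st n k * f k
      = ∑ k ∈ Finset.range (n+1), st n k * f k := by
    intro f
    refine Finset.sum_subset hsub fun k hk hk' => ?_
    have hk0 : k = 0 := by
      have := Finset.mem_range.mp hk
      simp only [Finset.mem_Icc] at hk'
      omega
    rw [hk0, st_zero n hn, zero_mul]
  have hSst : ∀ k ∈ Finset.Icc 1 n, S n k = st n k := by
    have h0 : ∀ w : ℂ, ∑ k ∈ Finset.Icc 1 n, (S n k - st n k) * ∏ j ∈ Finset.range k, (w - j) = 0 := by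
      intro w
      have h1 := hS n hn w
      have h2 := st_id n w
      have h3 : ∑ k ∈ Finset.Icc 1 n, st n k * ∏ j ∈ Finset.range k, (w - j)
          = ∑ k ∈ Finset.range (n+1), st n k * ∏ j ∈ Finset.range k, (w - j) :=
        hicc _
      calc ∑ k ∈ Finset.Icc 1 n, (S n k - st n k) * ∏ j ∈ Finset.range k, (w - j)
          = ∑ k ∈ Finset.Icc 1 n, S n k * ∏ j ∈ Finset.range k, (w - j)
            - ∑ k ∈ Finset.Icc 1 n, st n k * ∏ j ∈ Finset.range k, (w - j) := by
            rw [← Finset.sum_sub_distrib]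
            exact Finset.sum_congr rfl fun k _ => by ring
      _ = 0 := by rw [← h1, h3, ← h2]; ring
    intro k hk
    have := unique_coeffs n (fun k => S n k - st n k) h0 k hk
    have h4 : S n k - st n k = 0 := this
    linear_combination h4
  rw [iter_eval (σ:ℂ) α β hβ n z]
  have e1 : ∑ k ∈ Finset.Icc 1 n, (α - β) ^ (n - k) * S n k *
        ∏ j ∈ Finset.range k, (z + (σ:ℂ) / α + j * β)
      = ∑ k ∈ Finset.Icc 1 n, st n k * ((α - β) ^ (n - k) *
        ∏ j ∈ Finset.range k, (z + (σ:ℂ) / α + j * β)) := by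
    refine Finset.sum_congr rfl fun k hk => ?_
    rw [hSst k hk]; ring
  rw [e1, hicc]
  exact Finset.sum_congr rfl fun k _ => by ring
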